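/- Assume U is nonempty and there exists x̄ ∈ X with p(x̄) ∈ ℝ (i.e., dom p ≠ ∅). The following statements are equivalent: (i) stable strong robust duality holds, i.e., for every x* ∈ X* there exist u ∈ U and y_u* ∈ Y_u* with p*(x*) = F_u*(x*, y_u*) = q(x*); (ii) ∂^ε p(x) = D^ε(x) for all ε ≥ 0 and all x ∈ X, where D^ε(x) := ⋃_{ε₁,ε₂≥0, ε₁+ε₂=ε} ⋃_{u∈I^{ε₁}(x)} proj^u_{X*} ∂^{ε₂}F_u(x, 0_u). -/

import Mathlib

set_option linter.unusedSectionVars false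


noncomputable section

namespace RobustDuality

/-- The set of `ε`-minimizers of an extended-real-valued function `h`:
`{z | h z ∈ ℝ ∧ h z ≤ inf h + ε}` (empty when `inf h ∉ ℝ`). -/
def epsArgmin {Z : Type*} (h : Z → EReal) (ε : ℝ) : Set Z :=
  {z | (∃ r : ℝ, h z = (r : EReal)) ∧ h z ≤ (⨅ w, h w) + (ε : EReal)}

variable {X : Type*} [AddCommGroup X] [Module ℝ X] [TopologicalSpace X]
  [IsTopologicalAddGroup X] [ContinuousSMul ℝ X] [LocallyConvexSpace ℝ X] [T2Space X]

/-- `(M^ε h)(x*) := ε-argmin (h - x*)` for `h : X → EReal` and `x* ∈ X*`. -/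
def M1 (h : X → EReal) (ε : ℝ) (xs : X →L[ℝ] ℝ) : Set X :=
  epsArgmin (fun x => h x - ((xs x : ℝ) : EReal)) ε

/-- Fenchel conjugate of `h : X → EReal`. -/
def conj1 (h : X → EReal) (xs : X →L[ℝ] ℝ) : EReal :=
  ⨆ x : X, ((xs x : ℝ) : EReal) - h x

/-- `ε`-subdifferential of `h : X → EReal` at `a`. -/
def epsSubdiff1 (h : X → EReal) (ε : ℝ) (a : X) : Set (X →L[ℝ] ℝ) :=
  {xs | (∃ r : ℝ, h a = (r : EReal)) ∧
    ∀ x, h a + ((xs x - xs a - ε : ℝ) : EReal) ≤ h x}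

section Pair

variable {Yu : Type*} [AddCommGroup Yu] [Module ℝ Yu] [TopologicalSpace Yu]
  [IsTopologicalAddGroup Yu] [ContinuousSMul ℝ Yu] [LocallyConvexSpace ℝ Yu] [T2Space Yu]

/-- Fenchel conjugate of `F : X × Y → EReal` at `(x*, y*)`. -/
def conj2 (F : X × Yu → EReal) (xs : X →L[ℝ] ℝ) (ys : Yu →L[ℝ] ℝ) : EReal :=
  ⨆ z : X × Yu, ((xs z.1 + ys z.2 : ℝ) : EReal) - F z

/-- `(M^ε F)(x*, y*) := ε-argmin (F - (x*, y*))`. -/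
def M2 (F : X × Yu → EReal) (ε : ℝ) (xs : X →L[ℝ] ℝ) (ys : Yu →L[ℝ] ℝ) : Set (X × Yu) :=
  epsArgmin (fun z => F z - ((xs z.1 + ys z.2 : ℝ) : EReal)) ε

/-- `ε`-subdifferential of `F : X × Y → EReal` at `a`, as a set of dual pairs. -/
def epsSubdiff2 (F : X × Yu → EReal) (ε : ℝ) (a : X × Yu) :
    Set ((X →L[ℝ] ℝ) × (Yu →L[ℝ] ℝ)) :=
  {zs | (∃ r : ℝ, F a = (r : EReal)) ∧
    ∀ z, F a + ((zs.1 z.1 + zs.2 z.2 - zs.1 a.1 - zs.2 a.2 - ε : ℝ) : EReal) ≤ F z}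

end Pair

variable {U : Type*} {Y : U → Type*} [∀ u, AddCommGroup (Y u)] [∀ u, Module ℝ (Y u)]
  [∀ u, TopologicalSpace (Y u)] [∀ u, IsTopologicalAddGroup (Y u)]
  [∀ u, ContinuousSMul ℝ (Y u)] [∀ u, LocallyConvexSpace ℝ (Y u)] [∀ u, T2Space (Y u)]

/-- The robust objective `p := sup_{u ∈ U} F_u (·, 0_u)`. -/
def pRob (F : ∀ u, X × Y u → EReal) (x : X) : EReal := ⨆ u, F u (x, 0)

/-- `q := inf over u ∈ U and y* ∈ Y_u* of F_u*(·, y*)`. -/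
def qRob (F : ∀ u, X × Y u → EReal) (xs : X →L[ℝ] ℝ) : EReal :=
  ⨅ (u : U) (ys : Y u →L[ℝ] ℝ), conj2 (F u) xs ys

/-- `S^ε(x*) := {x : p x ∈ ℝ ∧ p x - ⟨x*, x⟩ ≤ -q x* + ε}`. -/
def Sset (F : ∀ u, X × Y u → EReal) (ε : ℝ) (xs : X →L[ℝ] ℝ) : Set X :=
  {x | (∃ r : ℝ, pRob F x = (r : EReal)) ∧
    pRob F x - ((xs x : ℝ) : EReal) ≤ -qRob F xs + (ε : EReal)}

/-- `J^ε(u) := {x : p x ∈ ℝ ∧ p x ≤ F_u(x, 0) + ε}`. -/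
def Jset (F : ∀ u, X × Y u → EReal) (ε : ℝ) (u : U) : Set X :=
  {x | (∃ r : ℝ, pRob F x = (r : EReal)) ∧ pRob F x ≤ F u (x, 0) + (ε : EReal)}

/-- `A^{(ε₁,ε₂)}_{(u,y*)}(x*) := {x ∈ J^{ε₁}(u) : (x, 0) ∈ (M^{ε₂}F_u)(x*, y*)}`. -/
def Aset (F : ∀ u, X × Y u → EReal) (ε₁ ε₂ : ℝ) (u : U) (ys : Y u →L[ℝ] ℝ)
    (xs : X →L[ℝ] ℝ) : Set X :=
  {x | x ∈ Jset F ε₁ u ∧ (x, (0 : Y u)) ∈ M2 (F u) ε₂ xs ys}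

/-- `𝒜^ε(x*)`. -/
def calA (F : ∀ u, X × Y u → EReal) (ε : ℝ) (xs : X →L[ℝ] ℝ) : Set X :=
  ⋂ (η : ℝ) (_ : 0 < η),
    ⋃ (u : U) (ys : Y u →L[ℝ] ℝ) (ε₁ : ℝ) (ε₂ : ℝ)
      (_ : 0 ≤ ε₁) (_ : 0 ≤ ε₂) (_ : ε₁ + ε₂ = ε + η), Aset F ε₁ ε₂ u ys xs

/-- `B^ε_{(u,y*)}(x*)`. -/
def Bset (F : ∀ u, X × Y u → EReal) (ε : ℝ) (u : U) (ys : Y u →L[ℝ] ℝ)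
    (xs : X →L[ℝ] ℝ) : Set X :=
  ⋃ (ε₁ : ℝ) (ε₂ : ℝ) (_ : 0 ≤ ε₁) (_ : 0 ≤ ε₂) (_ : ε₁ + ε₂ = ε),
    Aset F ε₁ ε₂ u ys xs

/-- `B^ε(x*) := ⋃_{u, y*} B^ε_{(u,y*)}(x*)`. -/
def BsetAll (F : ∀ u, X × Y u → EReal) (ε : ℝ) (xs : X →L[ℝ] ℝ) : Set X :=
  ⋃ (u : U) (ys : Y u →L[ℝ] ℝ), Bset F ε u ys xs

/-- `I^ε(x)`: the set of `ε`-active indices at `x`. -/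
def Iset (F : ∀ u, X × Y u → EReal) (ε : ℝ) (x : X) : Set U :=
  {u | (∃ r : ℝ, pRob F x = (r : EReal)) ∧ pRob F x - (ε : EReal) ≤ F u (x, 0)}

/-- `C^ε(x)`. -/
def Cset (F : ∀ u, X × Y u → EReal) (ε : ℝ) (x : X) : Set (X →L[ℝ] ℝ) :=
  ⋂ (η : ℝ) (_ : 0 < η),
    ⋃ (ε₁ : ℝ) (ε₂ : ℝ) (_ : 0 ≤ ε₁) (_ : 0 ≤ ε₂) (_ : ε₁ + ε₂ = ε + η)
      (u : U) (_ : u ∈ Iset F ε₁ x),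
      Prod.fst '' epsSubdiff2 (F u) ε₂ (x, (0 : Y u))

/-- `D^ε(x)`. -/
def Dset (F : ∀ u, X × Y u → EReal) (ε : ℝ) (x : X) : Set (X →L[ℝ] ℝ) :=
  ⋃ (ε₁ : ℝ) (ε₂ : ℝ) (_ : 0 ≤ ε₁) (_ : 0 ≤ ε₂) (_ : ε₁ + ε₂ = ε)
    (u : U) (_ : u ∈ Iset F ε₁ x),
    Prod.fst '' epsSubdiff2 (F u) ε₂ (x, (0 : Y u))

/-- The exact active index set `I(x) := {u : F_u(x,0) = p(x)}` (when `p(x) ∈ ℝ`). -/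
def I0set (F : ∀ u, X × Y u → EReal) (x : X) : Set U :=
  {u | (∃ r : ℝ, pRob F x = (r : EReal)) ∧ F u (x, 0) = pRob F x}

/-- `D(x) := ⋃_{u ∈ I(x)} proj_{X*} ∂F_u(x, 0)`. -/
def D0set (F : ∀ u, X × Y u → EReal) (x : X) : Set (X →L[ℝ] ℝ) :=
  ⋃ (u : U) (_ : u ∈ I0set F x), Prod.fst '' epsSubdiff2 (F u) 0 (x, (0 : Y u))

/-- `B_{(u,y*)}(x*) := {x ∈ J(u) : (x, 0) ∈ (M F_u)(x*, y*)}`. -/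
def B0set (F : ∀ u, X × Y u → EReal) (u : U) (ys : Y u →L[ℝ] ℝ)
    (xs : X →L[ℝ] ℝ) : Set X :=
  {x | (∃ r : ℝ, pRob F x = (r : EReal)) ∧ F u (x, 0) = pRob F x ∧
    (x, (0 : Y u)) ∈ M2 (F u) 0 xs ys}

/-! ### Auxiliary lemmas for the proof of Theorem 7.1 -/

lemma ereal_trichotomy (a : EReal) : a = ⊥ ∨ a = ⊤ ∨ ∃ r : ℝ, a = (r : EReal) := by
  cases a with
  | bot => exact Or.inl rfl
  | coe r => exact Or.inr (Or.inr ⟨r, rfl⟩)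
  | top => exact Or.inr (Or.inl rfl)

lemma F_le_pRob (F : ∀ u, X × Y u → EReal) (u : U) (x : X) : F u (x, 0) ≤ pRob F x :=
  le_iSup (fun u => F u (x, 0)) u

lemma le_conj2' (F : ∀ u, X × Y u → EReal) (u : U) (xs : X →L[ℝ] ℝ) (ys : Y u →L[ℝ] ℝ)
    (z : X × Y u) : ((xs z.1 + ys z.2 : ℝ) : EReal) - F u z ≤ conj2 (F u) xs ys :=
  le_iSup (fun z : X × Y u => ((xs z.1 + ys z.2 : ℝ) : EReal) - F u z) z

lemma le_conj1' (F : ∀ u, X × Y u → EReal) (xs : X →L[ℝ] ℝ) (x : X) :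
    ((xs x : ℝ) : EReal) - pRob F x ≤ conj1 (pRob F) xs :=
  le_iSup (fun x : X => ((xs x : ℝ) : EReal) - pRob F x) x

lemma conj1_le_conj2' (F : ∀ u, X × Y u → EReal) (u : U) (xs : X →L[ℝ] ℝ)
    (ys : Y u →L[ℝ] ℝ) : conj1 (pRob F) xs ≤ conj2 (F u) xs ys := by
  refine iSup_le fun x => ?_
  have h1 : ((xs x : ℝ) : EReal) - pRob F x
      ≤ ((xs x + ys 0 : ℝ) : EReal) - F u (x, (0 : Y u)) := by
    rw [map_zero, add_zero]
    exact EReal.sub_le_sub le_rfl (F_le_pRob F u x)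
  exact h1.trans (le_conj2' F u xs ys (x, 0))

lemma conj1_le_qRob (F : ∀ u, X × Y u → EReal) (xs : X →L[ℝ] ℝ) :
    conj1 (pRob F) xs ≤ qRob F xs :=
  le_iInf fun u => le_iInf fun ys => conj1_le_conj2' F u xs ys

/-- The inclusion `D^ε(x) ⊆ ∂^ε p(x)` always holds. -/
lemma Dset_subset_epsSubdiff (F : ∀ u, X × Y u → EReal) {ε : ℝ} {x : X} :
    Dset F ε x ⊆ epsSubdiff1 (pRob F) ε x := by
  intro xs hxs
  simp only [Dset, Set.mem_iUnion, Set.mem_image] at hxs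
  obtain ⟨ε₁, ε₂, hε₁, hε₂, hsum, u, ⟨⟨rp, hrp⟩, hI⟩, zs, ⟨⟨rf, hrf⟩, hsub⟩, hfst⟩ := hxs
  refine ⟨⟨rp, hrp⟩, fun x' => ?_⟩
  have hsub' := hsub (x', 0)
  rw [hrf] at hsub'
  simp only [map_zero] at hsub'
  rw [hrp, hrf, ← EReal.coe_sub, EReal.coe_le_coe_iff] at hI
  rw [hrp, ← EReal.coe_add]
  rw [← EReal.coe_add] at hsub'
  calc ((rp + (xs x' - xs x - ε) : ℝ) : EReal)
      ≤ ((rf + (zs.1 x' + 0 - zs.1 x - 0 - ε₂) : ℝ) : EReal) := by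
        rw [hfst]; exact EReal.coe_le_coe_iff.mpr (by linarith)
    _ ≤ F u (x', 0) := hsub'
    _ ≤ pRob F x' := F_le_pRob F u x'

/-- Theorem 7.1 (stable strong robust duality). -/
theorem stable_strong_robust_duality_iff
    (F : ∀ u, X × Y u → EReal) (hU : Nonempty U) (hF : ∀ u z, F u z ≠ ⊥)
    (hdomp : ∃ xbar : X, ∃ r : ℝ, pRob F xbar = (r : EReal)) :
    (∀ xs : X →L[ℝ] ℝ, ∃ (u : U) (ys : Y u →L[ℝ] ℝ),
       conj1 (pRob F) xs = conj2 (F u) xs ys ∧ conj2 (F u) xs ys = qRob F xs) ↔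
    (∀ ε : ℝ, 0 ≤ ε → ∀ x : X, epsSubdiff1 (pRob F) ε x = Dset F ε x) := by
  obtain ⟨xbar, pb, hpb⟩ := hdomp
  constructor
  · -- (i) → (ii)
    intro hi ε hε x
    apply Set.Subset.antisymm ?_ (Dset_subset_epsSubdiff F)
    rintro xs ⟨⟨rp, hrp⟩, hs⟩
    obtain ⟨u, ys, h1, _h2⟩ := hi xs
    -- Step 1 : conj2 (F u) xs ys ≤ xs x - rp + ε
    have hc2 : conj2 (F u) xs ys ≤ ((xs x - rp + ε : ℝ) : EReal) := by
      rw [← h1]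
      refine iSup_le fun x' => ?_
      have hsx := hs x'
      rw [hrp, ← EReal.coe_add] at hsx
      rcases ereal_trichotomy (pRob F x') with hb | ht | ⟨s, hsx'⟩
      · rw [hb, le_bot_iff] at hsx
        exact absurd hsx (EReal.coe_ne_bot _)
      · rw [ht, EReal.sub_top]
        exact bot_le
      · rw [hsx'] at hsx ⊢
        rw [EReal.coe_le_coe_iff] at hsx
        rw [← EReal.coe_sub]
        exact EReal.coe_le_coe_iff.mpr (by linarith)
    -- Step 2 : F u (x,0) is finite
    have hFt : F u (x, (0 : Y u)) ≠ ⊤ := by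
      intro h
      have hle := F_le_pRob F u x
      rw [h, hrp, top_le_iff] at hle
      exact EReal.coe_ne_top rp hle
    set rf : ℝ := (F u (x, (0 : Y u))).toReal with hrf_def
    have hrf : F u (x, (0 : Y u)) = (rf : EReal) := (EReal.coe_toReal hFt (hF u _)).symm
    -- rf ≤ rp
    have hrfrp : rf ≤ rp := by
      have hle := F_le_pRob F u x
      rw [hrf, hrp, EReal.coe_le_coe_iff] at hle
      exact hle
    -- rp - rf ≤ ε
    have hε₁le : rp - rf ≤ ε := by
      have hle := (le_conj2' F u xs ys (x, 0)).trans hc2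
      rw [hrf] at hle
      simp only [map_zero, add_zero] at hle
      rw [← EReal.coe_sub, EReal.coe_le_coe_iff] at hle
      linarith
    -- membership in Dset
    simp only [Dset, Set.mem_iUnion, Set.mem_image]
    refine ⟨rp - rf, ε - (rp - rf), by linarith, by linarith, by ring, u,
      ⟨⟨rp, hrp⟩, ?_⟩, (xs, ys), ⟨⟨rf, hrf⟩, fun z => ?_⟩, rfl⟩
    · rw [hrp, hrf, ← EReal.coe_sub]
      exact EReal.coe_le_coe_iff.mpr (by linarith)
    · -- ε₂-subdifferential inequality
      have hle := (le_conj2' F u xs ys z).trans hc2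
      rw [hrf, ← EReal.coe_add]
      rcases ereal_trichotomy (F u z) with hb | ht | ⟨s, hsz⟩
      · exact absurd hb (hF u z)
      · rw [ht]; exact le_top
      · rw [hsz] at hle ⊢
        rw [← EReal.coe_sub, EReal.coe_le_coe_iff] at hle
        simp only [map_zero]
        exact EReal.coe_le_coe_iff.mpr (by linarith)
  · -- (ii) → (i)
    intro hii xs
    rcases eq_or_ne (conj1 (pRob F) xs) ⊤ with htop | htop
    · -- the conjugate is +∞ : everything is +∞
      obtain ⟨u⟩ := hU
      have hc2 : conj2 (F u) xs 0 = ⊤ :=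
        top_le_iff.mp (htop ▸ conj1_le_conj2' F u xs 0)
      have hq : qRob F xs = ⊤ :=
        top_le_iff.mp (htop ▸ conj1_le_qRob F xs)
      exact ⟨u, 0, htop.trans hc2.symm, hc2.trans hq.symm⟩
    · -- the conjugate is finite
      have hge : ((xs xbar - pb : ℝ) : EReal) ≤ conj1 (pRob F) xs := by
        have := le_conj1' F xs xbar
        rw [hpb, ← EReal.coe_sub] at this
        exact this
      have hbot : conj1 (pRob F) xs ≠ ⊥ := by
        intro h
        rw [h, le_bot_iff] at hge
        exact EReal.coe_ne_bot _ hge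
      set c : ℝ := (conj1 (pRob F) xs).toReal with hc_def
      have hc : conj1 (pRob F) xs = (c : EReal) := (EReal.coe_toReal htop hbot).symm
      rw [hc, EReal.coe_le_coe_iff] at hge
      -- ε := pb + c - xs xbar ≥ 0 and xs ∈ ∂^ε p (xbar)
      have hεnn : 0 ≤ pb + c - xs xbar := by linarith
      have hmem : xs ∈ epsSubdiff1 (pRob F) (pb + c - xs xbar) xbar := by
        refine ⟨⟨pb, hpb⟩, fun x' => ?_⟩
        have hx' := le_conj1' F xs x'
        rw [hc] at hx'
        rw [hpb, ← EReal.coe_add]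
        rcases ereal_trichotomy (pRob F x') with hb | ht | ⟨s, hsx'⟩
        · rw [hb, EReal.coe_sub_bot, top_le_iff] at hx'
          exact absurd hx' (EReal.coe_ne_top c)
        · rw [ht]; exact le_top
        · rw [hsx'] at hx' ⊢
          rw [← EReal.coe_sub, EReal.coe_le_coe_iff] at hx'
          exact EReal.coe_le_coe_iff.mpr (by linarith)
      rw [hii (pb + c - xs xbar) hεnn xbar] at hmem
      simp only [Dset, Set.mem_iUnion, Set.mem_image] at hmem
      obtain ⟨ε₁, ε₂, hε₁, hε₂, hsum, u, ⟨_, hI⟩, zs, ⟨⟨rf, hrf⟩, hsub⟩, hfst⟩ := hmem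
      rw [hpb, hrf, ← EReal.coe_sub, EReal.coe_le_coe_iff] at hI
      have hconj2_le : conj2 (F u) xs zs.2 ≤ (c : EReal) := by
        refine iSup_le fun z => ?_
        have hsz := hsub z
        rw [hrf, hfst, ← EReal.coe_add] at hsz
        simp only [map_zero] at hsz
        rcases ereal_trichotomy (F u z) with hb | ht | ⟨s, hfz⟩
        · exact absurd hb (hF u z)
        · rw [ht, EReal.sub_top]; exact bot_le
        · rw [hfz] at hsz ⊢
          rw [EReal.coe_le_coe_iff] at hsz
          rw [← EReal.coe_sub]
          exact EReal.coe_le_coe_iff.mpr (by linarith)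
      have h1 : conj1 (pRob F) xs = conj2 (F u) xs zs.2 :=
        le_antisymm (conj1_le_conj2' F u xs zs.2) (hconj2_le.trans_eq hc.symm)
      have hq_le : qRob F xs ≤ conj2 (F u) xs zs.2 := by
        refine (iInf_le _ u).trans (iInf_le _ zs.2)
      exact ⟨u, zs.2, h1, le_antisymm (h1 ▸ conj1_le_qRob F xs) hq_le⟩

end RobustDuality
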